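/- Let v be a fixed vertex of degree 2 in a graph generated by the configuration model with N_2 degree-2 vertices and kernel edge count |E(K)|, where degree-2 half-edges and kernel half-edges are matched uniformly. The probability that v lies on a cycle consisting entirely of degree-2 vertices of length k is at most (1/(2N_2 + 2|E(K)| - 1)) · ∏_{j=0}^{k-2} (2N_2 - 2j - 1)/(2N_2 + 2|E(K)| - 2j - 3). -/

import Mathlib

/-- The `b`-th half-edge of the degree-2 vertex `j` among the `2N₂ + 2E` half-edges of
the configuration model (vertex `j < N₂` owns half-edges `2j` and `2j+1`). -/
def halfEdge (N2 E : ℕ) (j : Fin N2) (b : Bool) : Fin (2 * N2 + 2 * E) :=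
  ⟨2 * (j : ℕ) + (if b then 0 else 1), by
    have := j.isLt; cases b <;> simp <;> omega⟩

/-- A uniform perfect matching on half-edges, encoded as a fixed-point free involution. -/
def IsMatching {n : ℕ} (σ : Equiv.Perm (Fin n)) : Prop :=
  ∀ i, σ i ≠ i ∧ σ (σ i) = i

/-- The event that the degree-2 vertex `0` lies on a cycle of length `k` consisting
entirely of degree-2 vertices: there are distinct degree-2 vertices `w 0 = 0, w 1, …`,
cyclically indexed, whose half-edges are matched consecutively by `σ`. -/
def OnDisjointCycle (N2 E k : ℕ) (hN : 0 < N2)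
    (σ : Equiv.Perm (Fin (2 * N2 + 2 * E))) : Prop :=
  ∃ (w : ZMod k → Fin N2) (b : ZMod k → Bool),
    Function.Injective w ∧ w 0 = ⟨0, hN⟩ ∧
    ∀ i : ZMod k, σ (halfEdge N2 E (w i) (b i)) =
      halfEdge N2 E (w (i + 1)) (!b (i + 1))


def Mtch {α : Type*} (σ : Equiv.Perm α) : Prop := ∀ i, σ i ≠ i ∧ σ (σ i) = i

noncomputable def mc (α : Type*) : ℕ := Nat.card {σ : Equiv.Perm α // Mtch σ}

lemma mtch_permCongr {α β : Type*} (e : α ≃ β) (σ : Equiv.Perm α) :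
    Mtch (e.permCongr σ) ↔ Mtch σ := by
  constructor
  · intro h i
    obtain ⟨h1, h2⟩ := h (e i)
    simp only [Equiv.permCongr_apply, Equiv.symm_apply_apply] at h1 h2
    refine ⟨fun hx => h1 (by rw [hx]), e.injective ?_⟩
    simpa using h2
  · intro h x
    obtain ⟨h1, h2⟩ := h (e.symm x)
    simp only [Equiv.permCongr_apply, Equiv.symm_apply_apply]
    constructor
    · intro hx
      apply h1
      have := congrArg e.symm hx
      simpa using this
    · rw [h2]; simp

lemma mc_congr {α β : Type*} (e : α ≃ β) : mc α = mc β := by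
  exact Nat.card_congr ((e.permCongr).subtypeEquiv fun σ => (mtch_permCongr e σ).symm)

noncomputable def fMatch (m : ℕ) : ℕ := mc (Fin m)

lemma mc_eq_fMatch (α : Type*) [Fintype α] : mc α = fMatch (Fintype.card α) :=
  mc_congr (Fintype.equivFin α)

lemma fMatch_zero : fMatch 0 = 1 := by
  have : Unique {σ : Equiv.Perm (Fin 0) // Mtch σ} :=
    { default := ⟨1, fun i => i.elim0⟩
      uniq := fun σ => Subtype.ext (Equiv.ext fun i => i.elim0) }
  exact Nat.card_unique

section Recurrence

open Equiv Equiv.Perm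

variable {α : Type*} [DecidableEq α] [Fintype α] (a : α)

/-- partition: matchings by the partner of `a`. -/
noncomputable def partEquiv :
    {σ : Equiv.Perm α // Mtch σ} ≃
      Σ j : {x : α // x ≠ a}, {σ : Equiv.Perm α // Mtch σ ∧ σ a = ↑j} where
  toFun := fun ⟨σ, h⟩ => ⟨⟨σ a, (h a).1⟩, ⟨σ, h, rfl⟩⟩
  invFun := fun ⟨_, σ, h⟩ => ⟨σ, h.1⟩
  left_inv := fun ⟨σ, h⟩ => rfl
  right_inv := fun ⟨j, σ, h⟩ => Sigma.subtype_ext (Subtype.ext h.2) rfl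

variable {j : α} (hj : j ≠ a)

lemma comb_a (τ : Equiv.Perm {x : α // x ≠ a ∧ x ≠ j}) :
    (Equiv.swap a j * Equiv.Perm.ofSubtype τ) a = j := by
  rw [Equiv.Perm.mul_apply, Equiv.Perm.ofSubtype_apply_of_not_mem τ (by simp), Equiv.swap_apply_left]

lemma comb_j (τ : Equiv.Perm {x : α // x ≠ a ∧ x ≠ j}) :
    (Equiv.swap a j * Equiv.Perm.ofSubtype τ) j = a := by
  rw [Equiv.Perm.mul_apply, Equiv.Perm.ofSubtype_apply_of_not_mem τ (by simp), Equiv.swap_apply_right]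

lemma comb_other (τ : Equiv.Perm {x : α // x ≠ a ∧ x ≠ j}) {x : α} (hx : x ≠ a ∧ x ≠ j) :
    (Equiv.swap a j * Equiv.Perm.ofSubtype τ) x = ↑(τ ⟨x, hx⟩) := by
  rw [Equiv.Perm.mul_apply, Equiv.Perm.ofSubtype_apply_of_mem τ hx,
    Equiv.swap_apply_of_ne_of_ne (τ ⟨x, hx⟩).2.1 (τ ⟨x, hx⟩).2.2]

lemma mtch_iff_pred {σ : Equiv.Perm α} (h : Mtch σ) (ha : σ a = j) (x : α) :
    (x ≠ a ∧ x ≠ j) ↔ (σ x ≠ a ∧ σ x ≠ j) := by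
  have hsj : σ j = a := by rw [← ha, (h a).2]
  constructor
  · rintro ⟨h1, h2⟩
    refine ⟨fun hc => h2 ?_, fun hc => h1 ?_⟩
    · rw [← (h x).2, hc, ha]
    · rw [← (h x).2, hc, hsj]
  · rintro ⟨h1, h2⟩
    refine ⟨fun hc => h2 ?_, fun hc => h1 ?_⟩
    · rw [hc, ha]
    · rw [hc, hsj]

noncomputable def fiberEquiv :
    {σ : Equiv.Perm α // Mtch σ ∧ σ a = j} ≃
      {τ : Equiv.Perm {x : α // x ≠ a ∧ x ≠ j} // Mtch τ} where
  toFun := fun ⟨σ, h, ha⟩ =>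
    ⟨σ.subtypePerm (fun x => (mtch_iff_pred a h ha x).symm), by
      intro ⟨x, hx⟩
      constructor
      · intro hc
        exact (h x).1 (congrArg Subtype.val hc)
      · exact Subtype.ext (h x).2⟩
  invFun := fun ⟨τ, hτ⟩ =>
    ⟨Equiv.swap a j * Equiv.Perm.ofSubtype τ, by
      constructor
      · intro x
        by_cases hxa : x = a
        · rw [hxa]
          exact ⟨by rw [comb_a]; exact hj, by rw [comb_a, comb_j]⟩
        · by_cases hxj : x = j
          · rw [hxj]
            exact ⟨by rw [comb_j]; exact Ne.symm hj, by rw [comb_j, comb_a]⟩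
          · rw [comb_other a τ ⟨hxa, hxj⟩]
            constructor
            · intro hc
              exact (hτ ⟨x, hxa, hxj⟩).1 (Subtype.ext hc)
            · rw [comb_other a τ (τ ⟨x, hxa, hxj⟩).2]
              exact congrArg Subtype.val ((hτ ⟨x, hxa, hxj⟩).2)
      · exact comb_a a τ⟩
  left_inv := fun ⟨σ, h, ha⟩ => by
    apply Subtype.ext
    apply Equiv.ext
    intro x
    by_cases hxa : x = a
    · rw [hxa, comb_a, ha]
    · by_cases hxj : x = j
      · rw [hxj, comb_j]
        exact (h a).2.symm.trans (congrArg σ ha)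
      · rw [comb_other a _ ⟨hxa, hxj⟩]
        rfl
  right_inv := fun ⟨τ, hτ⟩ => by
    apply Subtype.ext
    apply Equiv.ext
    intro ⟨x, hx⟩
    apply Subtype.ext
    show (Equiv.swap a j * Equiv.Perm.ofSubtype τ) x = ↑(τ ⟨x, hx⟩)
    exact comb_other a τ hx

end Recurrence

lemma nat_card_sigma {ι : Type*} [Fintype ι] (F : ι → Type*) [∀ i, Finite (F i)] :
    Nat.card (Σ i, F i) = ∑ i, Nat.card (F i) := by
  haveI : ∀ i, Fintype (F i) := fun i => Fintype.ofFinite _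
  simp_rw [Nat.card_eq_fintype_card]
  exact Fintype.card_sigma

lemma card_compl_pair {α : Type*} [DecidableEq α] [Fintype α] {a j : α} (hj : j ≠ a) :
    Fintype.card {x : α // x ≠ a ∧ x ≠ j} = Fintype.card α - 2 := by
  have e : {x : α // x ≠ a ∧ x ≠ j} ≃ {x : α // ¬(x ∈ ({a, j} : Finset α))} :=
    Equiv.subtypeEquivRight (by intro x; simp [not_or])
  rw [Fintype.card_congr e, Fintype.card_subtype_compl]
  congr 1
  rw [Fintype.card_coe, Finset.card_insert_of_notMem (by simp [Ne.symm hj]),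
    Finset.card_singleton]

lemma card_ne {α : Type*} [DecidableEq α] [Fintype α] (a : α) :
    Fintype.card {x : α // x ≠ a} = Fintype.card α - 1 := by
  rw [Fintype.card_subtype_compl, Fintype.card_subtype_eq]

lemma mc_rec {α : Type*} [DecidableEq α] [Fintype α] (a : α) :
    mc α = (Fintype.card α - 1) * fMatch (Fintype.card α - 2) := by
  rw [mc, Nat.card_congr (partEquiv a), nat_card_sigma]
  have h : ∀ j : {x : α // x ≠ a},
      Nat.card {σ : Equiv.Perm α // Mtch σ ∧ σ a = ↑j} = fMatch (Fintype.card α - 2) := by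
    intro j
    rw [Nat.card_congr (fiberEquiv a j.2)]
    have h2 : Nat.card {τ : Equiv.Perm {x : α // x ≠ a ∧ x ≠ ↑j} // Mtch τ} = mc _ := rfl
    rw [h2, mc_eq_fMatch, card_compl_pair j.2]
  simp_rw [h]
  rw [Finset.sum_const, Finset.card_univ, card_ne, smul_eq_mul]

lemma fMatch_succ_succ (m : ℕ) : fMatch (m + 2) = (m + 1) * fMatch m := by
  have h := mc_rec (0 : Fin (m + 2))
  rw [Fintype.card_fin] at h
  simp at h; exact h

lemma fMatch_even_pos (n : ℕ) : 0 < fMatch (2 * n) := by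
  induction n with
  | zero => simp [fMatch_zero]
  | succ n ih =>
      have : 2 * (n + 1) = 2 * n + 2 := by ring
      rw [this, fMatch_succ_succ]
      positivity

lemma fMatch_prod (n : ℕ) : ∀ k, k ≤ n →
    fMatch (2 * n) = (∏ j ∈ Finset.range k, (2 * n - 2 * j - 1)) * fMatch (2 * (n - k)) := by
  intro k
  induction k with
  | zero => simp
  | succ k ih =>
      intro h
      rw [ih (by omega), Finset.prod_range_succ]
      have h1 : 2 * (n - k) = 2 * (n - (k + 1)) + 2 := by omega
      rw [h1, fMatch_succ_succ]
      have h2 : 2 * (n - (k + 1)) + 1 = 2 * n - 2 * k - 1 := by omega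
      rw [h2]
      ring

section Cycle

variable (N2 E k : ℕ)

lemma halfEdge_injective :
    Function.Injective (fun q : Fin N2 × Bool => halfEdge N2 E q.1 q.2) := by
  rintro ⟨j, b⟩ ⟨j', b'⟩ h
  simp only [halfEdge, Fin.mk.injEq] at h
  cases b <;> cases b' <;> simp at h <;>
    first
      | exact absurd h (by omega)
      | (simp only [Prod.mk.injEq]; exact ⟨Fin.ext h, trivial⟩)

variable {N2 E k}

/-- membership in the set of half-edges of the cycle described by `p` -/
def inCyc (p : (ZMod k → Fin N2) × (ZMod k → Bool)) (x : Fin (2 * N2 + 2 * E)) : Prop :=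
  ∃ q : ZMod k × Bool, halfEdge N2 E (p.1 q.1) q.2 = x

/-- `p` describes the cycle of `σ` through vertex `0` -/
def Wit (p : (ZMod k → Fin N2) × (ZMod k → Bool))
    (σ : Equiv.Perm (Fin (2 * N2 + 2 * E))) : Prop :=
  ∀ i, σ (halfEdge N2 E (p.1 i) (p.2 i)) = halfEdge N2 E (p.1 (i + 1)) (!p.2 (i + 1))

variable {p : (ZMod k → Fin N2) × (ZMod k → Bool)} {σ : Equiv.Perm (Fin (2 * N2 + 2 * E))}

lemma wit_maps (hm : Mtch σ) (hw : Wit p σ) :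
    ∀ x, inCyc p x → inCyc p (σ x) := by
  rintro x ⟨⟨i, c⟩, rfl⟩
  by_cases hc : c = p.2 i
  · subst hc
    rw [hw i]
    exact ⟨(i + 1, !p.2 (i + 1)), rfl⟩
  · have hc' : c = !p.2 i := by
      cases c <;> cases h2 : p.2 i <;> simp_all
    subst hc'
    have h3 := hw (i - 1)
    have h4 : i - 1 + 1 = i := by ring
    rw [h4] at h3
    rw [← h3, (hm _).2]
    exact ⟨(i - 1, p.2 (i - 1)), rfl⟩

lemma wit_iff (hm : Mtch σ) (hw : Wit p σ) :
    ∀ x, ¬ inCyc p x ↔ ¬ inCyc p (σ x) := by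
  intro x
  constructor
  · intro h hc
    apply h
    have := wit_maps hm hw (σ x) hc
    rwa [(hm x).2] at this
  · intro h hc
    exact h (wit_maps hm hw x hc)

/-- restriction of a matching to the complement of the cycle -/
def cRestr (hm : Mtch σ) (hw : Wit p σ) : Equiv.Perm {x : Fin (2 * N2 + 2 * E) // ¬ inCyc p x} :=
  σ.subtypePerm (fun x => (wit_iff hm hw x).symm)

lemma cRestr_mtch (hm : Mtch σ) (hw : Wit p σ) : Mtch (cRestr hm hw) := by
  intro ⟨x, hx⟩
  constructor
  · intro hc
    exact (hm x).1 (congrArg Subtype.val hc)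
  · exact Subtype.ext (hm x).2

lemma wit_ext {σ' : Equiv.Perm (Fin (2 * N2 + 2 * E))}
    (hm : Mtch σ) (hw : Wit p σ) (hm' : Mtch σ') (hw' : Wit p σ')
    (h : cRestr hm hw = cRestr hm' hw') : σ = σ' := by
  apply Equiv.ext
  intro x
  by_cases hx : inCyc p x
  · obtain ⟨⟨i, c⟩, rfl⟩ := hx
    by_cases hc : c = p.2 i
    · subst hc; rw [hw i, hw' i]
    · have hc' : c = !p.2 i := by
        cases c <;> cases h2 : p.2 i <;> simp_all
      subst hc'
      have h3 := hw (i - 1)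
      have h3' := hw' (i - 1)
      have h4 : i - 1 + 1 = i := by ring
      rw [h4] at h3 h3'
      have hv : σ (halfEdge N2 E (p.1 i) (!p.2 i)) = halfEdge N2 E (p.1 (i - 1)) (p.2 (i - 1)) := by
        rw [← h3, (hm _).2]
      have hv' : σ' (halfEdge N2 E (p.1 i) (!p.2 i)) = halfEdge N2 E (p.1 (i - 1)) (p.2 (i - 1)) := by
        rw [← h3', (hm' _).2]
      rw [hv, hv']
  · have := congrArg (fun τ => Subtype.val (τ ⟨x, hx⟩)) (congrArg Equiv.toFun h)
    exact this

end Cycle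

section Count

variable {N2 E k : ℕ} {p : (ZMod k → Fin N2) × (ZMod k → Bool)}

lemma g_injective (hinj : Function.Injective p.1) :
    Function.Injective (fun q : ZMod k × Bool => halfEdge N2 E (p.1 q.1) q.2) := by
  intro q q' h
  have h2 := halfEdge_injective N2 E
      (show (fun q : Fin N2 × Bool => halfEdge N2 E q.1 q.2) (p.1 q.1, q.2) =
        (fun q : Fin N2 × Bool => halfEdge N2 E q.1 q.2) (p.1 q'.1, q'.2) from h)
  rw [Prod.mk.injEq] at h2
  exact Prod.ext (hinj h2.1) h2.2

lemma card_not_inCyc [NeZero k] (hinj : Function.Injective p.1) :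
    mc {x : Fin (2 * N2 + 2 * E) // ¬ inCyc p x} = fMatch (2 * N2 + 2 * E - 2 * k) := by
  classical
  rw [mc_eq_fMatch]
  congr 1
  rw [Fintype.card_subtype_compl]
  have h1 : Fintype.card {x : Fin (2 * N2 + 2 * E) // inCyc p x} = 2 * k := by
    have e1 : (ZMod k × Bool) ≃ {x : Fin (2 * N2 + 2 * E) // inCyc p x} :=
      (Equiv.ofInjective _ (g_injective (E := E) hinj)).trans
        (Equiv.subtypeEquivRight (fun x => Iff.rfl))
    have h2 : Nat.card {x : Fin (2 * N2 + 2 * E) // inCyc p x} = 2 * k := by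
      rw [← Nat.card_congr e1, Nat.card_eq_fintype_card, Fintype.card_prod, ZMod.card,
        Fintype.card_bool, mul_comm]
    rwa [Nat.card_eq_fintype_card] at h2
  rw [h1, Fintype.card_fin]

lemma card_fiber_le [NeZero k] (hinj : Function.Injective p.1) :
    Nat.card {σ : Equiv.Perm (Fin (2 * N2 + 2 * E)) // Mtch σ ∧ Wit p σ} ≤
      fMatch (2 * N2 + 2 * E - 2 * k) := by
  rw [← card_not_inCyc (E := E) hinj, mc]
  apply Nat.card_le_card_of_injective
    (fun s : {σ : Equiv.Perm (Fin (2 * N2 + 2 * E)) // Mtch σ ∧ Wit p σ} =>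
      (⟨cRestr s.2.1 s.2.2, cRestr_mtch s.2.1 s.2.2⟩ :
        {τ : Equiv.Perm {x : Fin (2 * N2 + 2 * E) // ¬ inCyc p x} // Mtch τ}))
  intro s t h
  exact Subtype.ext (wit_ext s.2.1 s.2.2 t.2.1 t.2.2 (congrArg Subtype.val h))

end Count

section Assemble

lemma two_mul_card_le_of {A D : Type*} [Finite A] [Finite D] (R : D → A → Prop)
    (h2 : ∀ a, ∃ d d', d ≠ d' ∧ R d a ∧ R d' a) (m : ℕ)
    (hm : ∀ d, Nat.card {a : A // R d a} ≤ m) :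
    2 * Nat.card A ≤ Nat.card D * m := by
  classical
  haveI : Fintype D := Fintype.ofFinite _
  have step1 : 2 * Nat.card A ≤ Nat.card {q : A × D // R q.2 q.1} := by
    have hΦ : Function.Injective (fun q : A × Bool =>
        (cond q.2 ⟨(q.1, (h2 q.1).choose), (h2 q.1).choose_spec.choose_spec.2.1⟩
          ⟨(q.1, (h2 q.1).choose_spec.choose), (h2 q.1).choose_spec.choose_spec.2.2⟩ :
            {q : A × D // R q.2 q.1})) := by
      rintro ⟨a, c⟩ ⟨a', c'⟩ h
      have hv := congrArg Subtype.val h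
      cases c <;> cases c' <;> dsimp only [cond] at hv <;>
          have ha : a = a' := congrArg Prod.fst hv
      · rw [ha]
      · subst ha
        exact absurd (congrArg Prod.snd hv).symm (h2 a).choose_spec.choose_spec.1
      · subst ha
        exact absurd (congrArg Prod.snd hv) (h2 a).choose_spec.choose_spec.1
      · rw [ha]
    calc 2 * Nat.card A = Nat.card (A × Bool) := by
          rw [Nat.card_prod, Nat.card_eq_fintype_card (α := Bool), Fintype.card_bool, mul_comm]
      _ ≤ _ := Nat.card_le_card_of_injective _ hΦ
  have e1 : {q : A × D // R q.2 q.1} ≃ Σ d : D, {a : A // R d a} :=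
    { toFun := fun q => ⟨q.1.2, q.1.1, q.2⟩
      invFun := fun q => ⟨(q.2.1, q.1), q.2.2⟩
      left_inv := fun ⟨⟨a, d⟩, h⟩ => rfl
      right_inv := fun ⟨d, a, h⟩ => rfl }
  calc 2 * Nat.card A ≤ Nat.card {q : A × D // R q.2 q.1} := step1
    _ = ∑ d : D, Nat.card {a : A // R d a} := by rw [Nat.card_congr e1, nat_card_sigma]
    _ ≤ ∑ _d : D, m := Finset.sum_le_sum fun d _ => hm d
    _ = Nat.card D * m := by
        rw [Finset.sum_const, Finset.card_univ, smul_eq_mul, Nat.card_eq_fintype_card]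

variable {N2 E k : ℕ}

/-- data describing a potential cycle through vertex 0 -/
abbrev CData (N2 k : ℕ) (hN : 0 < N2) :=
  {p : (ZMod k → Fin N2) × (ZMod k → Bool) // Function.Injective p.1 ∧ p.1 0 = ⟨0, hN⟩}

lemma card_CData_le (N2 k : ℕ) [NeZero k] (hN : 0 < N2) :
    Nat.card (CData N2 k hN) ≤ 2 ^ k * (N2 - 1).descFactorial (k - 1) := by
  classical
  set T := (({i : ZMod k // i ≠ 0} ↪ {x : Fin N2 // x ≠ ⟨0, hN⟩}) × (ZMod k → Bool)) with hT
  have key : Nat.card (CData N2 k hN) ≤ Nat.card T := by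
    apply Nat.card_le_card_of_injective (fun d : CData N2 k hN =>
      ((⟨fun i => ⟨d.1.1 i, fun hc => i.2 (d.2.1 (hc.trans d.2.2.symm))⟩,
        fun i i' h => Subtype.ext (d.2.1 (congrArg Subtype.val h))⟩, d.1.2) : T))
    intro d d' h
    have hb := congrArg Prod.snd h
    have hw : ∀ i : ZMod k, ∀ hi : i ≠ 0, d.1.1 i = d'.1.1 i := by
      intro i hi
      exact congrArg (fun e : T => ((e.1 ⟨i, hi⟩ : {x : Fin N2 // x ≠ ⟨0, hN⟩}) : Fin N2)) h
    dsimp only at hb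
    have hfst : d.1.1 = d'.1.1 := by
      funext i
      by_cases hi : i = 0
      · rw [hi, d.2.2, d'.2.2]
      · exact hw i hi
    exact Subtype.ext (Prod.ext hfst hb)
  refine key.trans_eq ?_
  rw [Nat.card_eq_fintype_card, Fintype.card_prod, Fintype.card_embedding_eq,
    card_ne, card_ne, Fintype.card_fun, Fintype.card_bool, ZMod.card,
    Fintype.card_fin, mul_comm]

variable {hN : 0 < N2}

noncomputable def chooseData {σ : Equiv.Perm (Fin (2 * N2 + 2 * E))}
    (h : OnDisjointCycle N2 E k hN σ) : CData N2 k hN :=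
  ⟨(h.choose, h.choose_spec.choose),
    h.choose_spec.choose_spec.1, h.choose_spec.choose_spec.2.1⟩

lemma chooseData_wit {σ : Equiv.Perm (Fin (2 * N2 + 2 * E))}
    (h : OnDisjointCycle N2 E k hN σ) : Wit (chooseData (E := E) h).1 σ :=
  h.choose_spec.choose_spec.2.2

/-- reversing the orientation of the cycle data -/
def revData (d : CData N2 k hN) : CData N2 k hN :=
  ⟨(fun i => d.1.1 (-i), fun i => !d.1.2 (-i)),
    fun i i' h => neg_injective (d.2.1 h),
    by simpa using d.2.2⟩

lemma revData_ne (d : CData N2 k hN) : revData d ≠ d := by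
  intro h
  have := congrArg (fun e : CData N2 k hN => e.1.2 0) h
  simp only [revData, neg_zero] at this
  exact Bool.not_ne_self _ this

lemma revData_wit {σ : Equiv.Perm (Fin (2 * N2 + 2 * E))} {d : CData N2 k hN}
    (hm : Mtch σ) (hw : Wit d.1 σ) : Wit (revData d).1 σ := by
  intro i
  have h := hw (-(i + 1))
  have h2 : -(i + 1) + 1 = -i := by ring
  rw [h2] at h
  show σ (halfEdge N2 E (d.1.1 (-i)) (!d.1.2 (-i))) = _
  rw [← h, (hm _).2]
  show _ = halfEdge N2 E (d.1.1 (-(i + 1))) (!!d.1.2 (-(i + 1)))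
  rw [Bool.not_not]

lemma two_mul_card_le [NeZero k] :
    2 * Nat.card {σ : Equiv.Perm (Fin (2 * N2 + 2 * E)) //
        IsMatching σ ∧ OnDisjointCycle N2 E k hN σ} ≤
      Nat.card (CData N2 k hN) * fMatch (2 * N2 + 2 * E - 2 * k) := by
  classical
  apply two_mul_card_le_of (R := fun (d : CData N2 k hN)
      (s : {σ : Equiv.Perm (Fin (2 * N2 + 2 * E)) //
        IsMatching σ ∧ OnDisjointCycle N2 E k hN σ}) => Wit d.1 s.1)
  · intro s
    exact ⟨revData (chooseData s.2.2), chooseData s.2.2, revData_ne _,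
      revData_wit (s.2.1 : Mtch s.1) (chooseData_wit s.2.2), chooseData_wit s.2.2⟩
  · intro d
    refine le_trans (Nat.card_le_card_of_injective
      (fun s => (⟨s.1.1, (s.1.2.1 : Mtch s.1.1), s.2⟩ :
          {σ : Equiv.Perm (Fin (2 * N2 + 2 * E)) // Mtch σ ∧ Wit d.1 σ}))
      ?_) (card_fiber_le d.2.1)
    intro s t h
    have h' := congrArg (fun x : {σ : Equiv.Perm (Fin (2 * N2 + 2 * E)) //
        Mtch σ ∧ Wit d.1 σ} => x.1) h
    exact Subtype.ext (Subtype.ext h')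

end Assemble

/-- The probability (under the uniform perfect matching of the `2N₂ + 2E` half-edges)
that the fixed degree-2 vertex `0` lies on a disjoint cycle of length `k` is at most
`(1/(2N₂+2E-1)) ∏_{j=0}^{k-2} (2N₂-2j-1)/(2N₂+2E-2j-3)`. -/
theorem prob_on_cycle_le (N2 E k : ℕ) (hN : 0 < N2) (hk : 1 ≤ k) (hkN : k ≤ N2) :
    (Nat.card {σ : Equiv.Perm (Fin (2 * N2 + 2 * E)) //
        IsMatching σ ∧ OnDisjointCycle N2 E k hN σ} : ℝ) /
      (Nat.card {σ : Equiv.Perm (Fin (2 * N2 + 2 * E)) // IsMatching σ}) ≤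
    (1 / (2 * (N2 : ℝ) + 2 * E - 1)) *
      ∏ j ∈ Finset.range (k - 1),
        ((2 * (N2 : ℝ) - 2 * j - 1) / (2 * (N2 : ℝ) + 2 * (E : ℝ) - 2 * j - 3)) := by
  obtain ⟨m, rfl⟩ : ∃ m, k = m + 1 := ⟨k - 1, by omega⟩
  simp only [Nat.add_sub_cancel]
  haveI : NeZero (m + 1) := ⟨by omega⟩
  set A := Nat.card {σ : Equiv.Perm (Fin (2 * N2 + 2 * E)) //
      IsMatching σ ∧ OnDisjointCycle N2 E (m+1) hN σ} with hA
  set Om := Nat.card {σ : Equiv.Perm (Fin (2 * N2 + 2 * E)) // IsMatching σ} with hOm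
  set P := ∏ j ∈ Finset.range (m + 1), (2 * N2 + 2 * E - 2 * j - 1) with hP
  set Q := ∏ j ∈ Finset.range m, (2 * N2 + 2 * E - 2 * j - 3) with hQ
  set NN := ∏ j ∈ Finset.range m, (2 * N2 - 2 * j - 1) with hNN
  set dF := (N2 - 1).descFactorial m with hdF
  -- the count of all matchings
  have hOmega : Om = fMatch (2 * N2 + 2 * E) := rfl
  have hOm_eq : Om = P * fMatch (2 * N2 + 2 * E - 2 * (m + 1)) := by
    have h := fMatch_prod (N2 + E) (m + 1) (by omega)
    have e1 : 2 * (N2 + E) = 2 * N2 + 2 * E := by ring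
    have e2 : 2 * ((N2 + E) - (m + 1)) = 2 * N2 + 2 * E - 2 * (m + 1) := by omega
    rw [e1, e2] at h
    exact hOmega.trans h
  have hfpos : 0 < fMatch (2 * N2 + 2 * E - 2 * (m + 1)) := by
    have h := fMatch_even_pos ((N2 + E) - (m + 1))
    rwa [show 2 * ((N2 + E) - (m + 1)) = 2 * N2 + 2 * E - 2 * (m + 1) by omega] at h
  have hPpos : 0 < P := by
    refine Finset.prod_pos fun j hj => ?_
    rw [Finset.mem_range] at hj
    omega
  have hOmpos : 0 < Om := by rw [hOm_eq]; exact Nat.mul_pos hPpos hfpos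
  -- the key counting estimates
  have h1 : 2 * A ≤ Nat.card (CData N2 (m + 1) hN) * fMatch (2 * N2 + 2 * E - 2 * (m + 1)) :=
    two_mul_card_le
  have h2 := card_CData_le N2 (m + 1) hN
  have key : A * P ≤ 2 ^ m * dF * Om := by
    have hc : 2 * (A * P) ≤ 2 * (2 ^ m * dF * Om) := by
      calc 2 * (A * P) = (2 * A) * P := by ring
        _ ≤ (Nat.card (CData N2 (m + 1) hN) * fMatch (2 * N2 + 2 * E - 2 * (m + 1))) * P :=
            Nat.mul_le_mul_right _ h1
        _ = Nat.card (CData N2 (m + 1) hN) * (P * fMatch (2 * N2 + 2 * E - 2 * (m + 1))) := by ring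
        _ = Nat.card (CData N2 (m + 1) hN) * Om := by rw [← hOm_eq]
        _ ≤ (2 ^ (m + 1) * dF) * Om := by
            rw [Nat.add_sub_cancel] at h2
            exact Nat.mul_le_mul_right _ h2
        _ = 2 * (2 ^ m * dF * Om) := by
            rw [pow_succ]
            ring
    omega
  -- numerator comparison
  have hnum : 2 ^ m * dF ≤ NN := by
    rw [hdF, Nat.descFactorial_eq_prod_range, hNN]
    calc 2 ^ m * ∏ j ∈ Finset.range m, (N2 - 1 - j)
        = ∏ j ∈ Finset.range m, 2 * (N2 - 1 - j) := by
          rw [Finset.prod_mul_distrib, Finset.prod_const, Finset.card_range]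
      _ ≤ ∏ j ∈ Finset.range m, (2 * N2 - 2 * j - 1) := by
          refine Finset.prod_le_prod' fun j hj => ?_
          rw [Finset.mem_range] at hj
          omega
  -- denominator factorization
  have hPQ : P = (2 * N2 + 2 * E - 1) * Q := by
    rw [hP, hQ, Finset.prod_range_succ' (fun j => 2 * N2 + 2 * E - 2 * j - 1) m, mul_comm]
    congr 1
    all_goals try refine Finset.prod_congr rfl fun j _ => by omega
    all_goals omega
  -- now pass to the reals
  have castsub : ∀ (a b : ℕ), b ≤ a → ((a - b : ℕ) : ℝ) = (a : ℝ) - b := by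
    intro a b hb
    rw [Nat.cast_sub hb]
  have hQcast : (Q : ℝ) = ∏ j ∈ Finset.range m, (2 * (N2 : ℝ) + 2 * E - 2 * j - 3) := by
    rw [hQ, Nat.cast_prod]
    refine Finset.prod_congr rfl fun j hj => ?_
    rw [Finset.mem_range] at hj
    rw [castsub _ _ (by omega), castsub _ _ (by omega)]
    push_cast
    ring
  have hNNcast : (NN : ℝ) = ∏ j ∈ Finset.range m, (2 * (N2 : ℝ) - 2 * j - 1) := by
    rw [hNN, Nat.cast_prod]
    refine Finset.prod_congr rfl fun j hj => ?_
    rw [Finset.mem_range] at hj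
    rw [castsub _ _ (by omega), castsub _ _ (by omega)]
    push_cast
    ring
  have hPcast : (P : ℝ) =
      (2 * (N2 : ℝ) + 2 * E - 1) *
        ∏ j ∈ Finset.range m, (2 * (N2 : ℝ) + 2 * E - 2 * j - 3) := by
    rw [hPQ, Nat.cast_mul, hQcast, castsub _ _ (by omega)]
    push_cast
    ring
  -- rewrite the right hand side
  have hRHS : (1 / (2 * (N2 : ℝ) + 2 * E - 1)) *
      ∏ j ∈ Finset.range m,
        ((2 * (N2 : ℝ) - 2 * j - 1) / (2 * (N2 : ℝ) + 2 * (E : ℝ) - 2 * j - 3)) =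
      (NN : ℝ) / (P : ℝ) := by
    rw [Finset.prod_div_distrib, div_mul_div_comm, one_mul, hNNcast, hPcast]
  rw [hRHS]
  have hOmposR : (0 : ℝ) < (Om : ℝ) := by exact_mod_cast hOmpos
  have hPposR : (0 : ℝ) < (P : ℝ) := by exact_mod_cast hPpos
  rw [div_le_div_iff₀ hOmposR hPposR]
  have : A * P ≤ NN * Om := key.trans (Nat.mul_le_mul_right _ hnum)
  exact_mod_cast this
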